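/- arXiv:2002.02207 — 5 statements merged into one kernel-verified Lean document; each statement's English description precedes it below -/
import Mathlib

section
/- Let (X, 𝒜, μ) be a σ-finite measure space and φ : X → (0,∞) measurable with √φ − 1 ∈ L²(μ). Then the function φ − 1 − (log φ)·1_{{|log φ| ≤ 1}} belongs to L¹(μ). -/
open MeasureTheory Real

theorem stmt_5 {X : Type*} [MeasurableSpace X] (μ : Measure X) [SigmaFinite μ]
    (φ : X → ℝ) (hφ_meas : Measurable φ) (hφ_pos : ∀ x, 0 < φ x)
    (h2 : MemLp (fun x => Real.sqrt (φ x) - 1) 2 μ) :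
    Integrable (fun x => φ x - 1 -
      (if |Real.log (φ x)| ≤ 1 then Real.log (φ x) else 0)) μ := by
  set g : X → ℝ := fun x => Real.sqrt (φ x) - 1 with hgdef
  set A : Set X := {x | 1 < |Real.log (φ x)|} with hA
  have hA_meas : MeasurableSet A :=
    measurableSet_lt measurable_const ((Real.measurable_log.comp hφ_meas).abs)
  have he9 : (2.7182818283 : ℝ) < Real.exp 1 := Real.exp_one_gt_d9
  have he9' : Real.exp 1 < 2.7182818286 := Real.exp_one_lt_d9
  -- on A, |g x| ≥ 1/3
  have hge : ∀ x ∈ A, (1/3 : ℝ) ≤ |g x| := by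
    intro x hx
    have ht : (0:ℝ) < φ x := hφ_pos x
    have hs : (0:ℝ) ≤ Real.sqrt (φ x) := Real.sqrt_nonneg _
    have hx' : 1 < |Real.log (φ x)| := hx
    rcases lt_or_ge 1 (Real.log (φ x)) with h | h
    · have hgt : Real.exp 1 < φ x := by
        have := Real.exp_lt_exp.mpr h
        rwa [Real.exp_log ht] at this
      have he : (9/4 : ℝ) ≤ φ x := by nlinarith
      have hsge : (3/2 : ℝ) ≤ Real.sqrt (φ x) := by
        rw [show (3/2:ℝ) = Real.sqrt (9/4) by
          rw [show (9/4:ℝ) = (3/2)^2 by norm_num, Real.sqrt_sq (by norm_num)]]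
        exact Real.sqrt_le_sqrt he
      have hgnn : (0:ℝ) ≤ g x := by simp only [hgdef]; linarith
      rw [abs_of_nonneg hgnn]
      simp only [hgdef]; linarith
    · have h' : Real.log (φ x) < -1 := by
        rcases abs_cases (Real.log (φ x)) with ⟨heq, _⟩ | ⟨heq, _⟩ <;> linarith
      have hlt : φ x < Real.exp (-1) := by
        have := Real.exp_lt_exp.mpr h'
        rwa [Real.exp_log ht] at this
      have he : φ x ≤ 4/9 := by
        have h4 : Real.exp (-1) ≤ 4/9 := by
          rw [Real.exp_neg, inv_le_comm₀ (Real.exp_pos 1) (by norm_num)]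
          nlinarith
        linarith
      have hsl : Real.sqrt (φ x) ≤ 2/3 := by
        rw [show (2/3:ℝ) = Real.sqrt (4/9) by
          rw [show (4/9:ℝ) = (2/3)^2 by norm_num, Real.sqrt_sq (by norm_num)]]
        exact Real.sqrt_le_sqrt he
      have hgnp : g x ≤ 0 := by simp only [hgdef]; linarith
      rw [abs_of_nonpos hgnp]
      simp only [hgdef]; linarith
  -- μ A < ∞
  have hμA : μ A < ⊤ := by
    have hlt := h2.meas_ge_lt_top (ε := (1/3 : NNReal))
      (by norm_num) (by norm_num) (by norm_num)
    refine lt_of_le_of_lt (measure_mono ?_) hlt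
    intro x hx
    simp only [Set.mem_setOf_eq]
    have := hge x hx
    rw [← NNReal.coe_le_coe]
    simpa [Real.norm_eq_abs] using this
  -- integrability of indicator of |g| on A
  have hindA : Integrable (A.indicator fun x => |g x|) μ := by
    have : IsFiniteMeasure (μ.restrict A) := by
      constructor; rw [Measure.restrict_apply_univ]; exact hμA
    have h1 : MemLp g 1 (μ.restrict A) :=
      (h2.restrict A).mono_exponent (by norm_num)
    have hint : Integrable g (μ.restrict A) := memLp_one_iff_integrable.mp h1
    exact (integrable_indicator_iff hA_meas).2 hint.abs
  have hsq : Integrable (fun x => g x ^ 2) μ := h2.integrable_sq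
  have hB : Integrable (fun x => 5 * g x ^ 2 + 2 * A.indicator (fun y => |g y|) x) μ :=
    (hsq.const_mul 5).add (hindA.const_mul 2)
  refine hB.mono' ?_ ?_
  · apply Measurable.aestronglyMeasurable
    exact ((hφ_meas.sub measurable_const).sub
      (Measurable.ite (measurableSet_le ((Real.measurable_log.comp hφ_meas).abs)
        measurable_const) (Real.measurable_log.comp hφ_meas) measurable_const))
  · filter_upwards with x
    have ht : (0:ℝ) < φ x := hφ_pos x
    have hs0 : (0:ℝ) < Real.sqrt (φ x) := Real.sqrt_pos.mpr ht
    have hssq : Real.sqrt (φ x) ^ 2 = φ x := Real.sq_sqrt ht.le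
    set s := Real.sqrt (φ x) with hsdef
    rw [Real.norm_eq_abs]
    by_cases hc : |Real.log (φ x)| ≤ 1
    · simp only [if_pos hc]
      have hxA : x ∉ A := by simp [hA, Set.mem_setOf_eq, not_lt.mpr hc]
      rw [Set.indicator_of_notMem hxA]
      have hlogl : -1 ≤ Real.log (φ x) := (abs_le.mp hc).1
      have hφl : Real.exp (-1) ≤ φ x := by
        have := Real.exp_le_exp.mpr hlogl; rwa [Real.exp_log ht] at this
      have hφl' : (1/4 : ℝ) ≤ φ x := by
        have he4 : (1/4:ℝ) ≤ Real.exp (-1) := by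
          rw [Real.exp_neg, le_inv_comm₀ (by norm_num) (Real.exp_pos 1)]
          nlinarith
        linarith
      have hs_half : (1/2 : ℝ) ≤ s := by nlinarith [hs0, hssq]
      have hlog2 : Real.log (φ x) = 2 * Real.log s := by
        rw [← hssq, Real.log_pow]; push_cast; ring
      have hlogle : Real.log s ≤ s - 1 := Real.log_le_sub_one_of_pos hs0
      have hlogge : 1 - 1/s ≤ Real.log s := by
        have h1 : (-Real.log s) + 1 ≤ Real.exp (-Real.log s) := Real.add_one_le_exp _
        rw [Real.exp_neg, Real.exp_log hs0] at h1
        rw [one_div]; linarith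
      have hnn : 0 ≤ φ x - 1 - Real.log (φ x) := by
        have := Real.log_le_sub_one_of_pos ht; linarith
      rw [abs_of_nonneg hnn]
      have key : s - 1 - Real.log s ≤ 2 * (s-1)^2 := by
        have h1 : s - 1 - Real.log s ≤ (s-1) - (1 - 1/s) := by linarith
        have h2' : (s-1) - (1 - 1/s) = (s-1)^2 / s := by field_simp
        have h3 : (s-1)^2 / s ≤ 2 * (s-1)^2 := by
          rw [div_le_iff₀ hs0]
          nlinarith [sq_nonneg (s-1)]
        linarith
      have heq : φ x - 1 - Real.log (φ x) = (s-1)^2 + 2*(s - 1 - Real.log s) := by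
        rw [hlog2, ← hssq]; ring
      simp only [hgdef, ← hsdef]
      linarith
    · simp only [if_neg hc, sub_zero]
      have hxA : x ∈ A := by simp only [hA, Set.mem_setOf_eq]; exact not_le.mp hc
      rw [Set.indicator_of_mem hxA]
      simp only [hgdef, ← hsdef]
      have heq : φ x - 1 = (s-1)^2 + 2*(s-1) := by nlinarith [hssq]
      rw [heq]
      have htri := abs_add_le ((s-1)^2) (2*(s-1))
      have h2' : |(s-1)^2| = (s-1)^2 := abs_of_nonneg (sq_nonneg _)
      have h3 : |2*(s-1)| = 2*|s-1| := by rw [abs_mul]; norm_num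
      nlinarith [sq_nonneg (s-1), abs_nonneg (s-1)]
end

section
/- Let (X, 𝒜, μ) be a σ-finite measure space and φ : X → (0,∞) measurable with √φ − 1 ∈ L²(μ). Then ∫_X (φ − 1 − log φ) dμ (a well-defined integral in [0,∞] since the integrand is nonnegative) is finite if and only if ∫_{{|log φ| > 1}} |log φ| dμ < ∞. -/
open MeasureTheory Real ENNReal

-- Lemma 1: |log t| ≤ (t - 1 - log t) + 2 for t > 0
lemma aux_abs_log_le {t : ℝ} (ht : 0 < t) :
    |Real.log t| ≤ (t - 1 - Real.log t) + 2 := by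
  rcases le_or_gt (Real.log t) 0 with h | h
  · rw [abs_of_nonpos h]; linarith
  · rw [abs_of_pos h]
    have hs0 : 0 < Real.sqrt t := Real.sqrt_pos.2 ht
    have hl : Real.log (Real.sqrt t) ≤ Real.sqrt t - 1 :=
      Real.log_le_sub_one_of_pos hs0
    have hls : Real.log (Real.sqrt t) = Real.log t / 2 := Real.log_sqrt ht.le
    have hsq : Real.sqrt t ^ 2 = t := Real.sq_sqrt ht.le
    nlinarith [sq_nonneg (Real.sqrt t - 2)]

-- Lemma 2: t - 1 - log t ≤ 9 (√t - 1)² for t ≥ 1/4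
lemma aux_f_le {t : ℝ} (ht : (1:ℝ)/4 ≤ t) :
    t - 1 - Real.log t ≤ 9 * (Real.sqrt t - 1)^2 := by
  have ht0 : 0 < t := by linarith
  have hlog : Real.log t⁻¹ ≤ t⁻¹ - 1 := Real.log_le_sub_one_of_pos (inv_pos.2 ht0)
  rw [Real.log_inv] at hlog
  have hti : t * t⁻¹ = 1 := mul_inv_cancel₀ ht0.ne'
  set s := Real.sqrt t with hsdef
  have hs : s ^ 2 = t := Real.sq_sqrt ht0.le
  have hs0 : 0 ≤ s := Real.sqrt_nonneg t
  have hs2 : (1:ℝ)/2 ≤ s := by nlinarith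
  have h1 : t - 1 - Real.log t ≤ t - 2 + t⁻¹ := by linarith
  have h2 : (t - 2 + t⁻¹) * t = (t - 1)^2 := by field_simp; ring
  nlinarith [mul_nonneg (sq_nonneg (s - 1)) (mul_nonneg (by linarith : (0:ℝ) ≤ 2*s - 1) (by linarith : (0:ℝ) ≤ 4*s + 1))]

-- Lemma 3: t - 1 - log t ≤ |log t| for 0 < t < 1
lemma aux_f_le_abs {t : ℝ} (ht0 : 0 < t) (ht : t < 1) :
    t - 1 - Real.log t ≤ |Real.log t| := by
  have : Real.log t < 0 := Real.log_neg ht0 ht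
  rw [abs_of_neg this]; linarith

-- Lemma 4: lower bound on (√t - 1)² on A
lemma aux_c_le {t : ℝ} (ht0 : 0 < t) (ht : 1 < |Real.log t|) :
    (1 - Real.exp (-(1/2)))^2 ≤ (Real.sqrt t - 1)^2 := by
  set em := Real.exp (-(1/2)) with hem
  set ep := Real.exp ((1:ℝ)/2) with hep
  have hme : em * ep = 1 := by
    rw [hem, hep, ← Real.exp_add]; norm_num
  have hem0 : 0 < em := Real.exp_pos _
  have hep0 : 0 < ep := Real.exp_pos _
  have hem1 : em < 1 := by
    rw [hem]; exact Real.exp_lt_one_iff.2 (by norm_num)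
  have hsum : 2 ≤ em + ep := by nlinarith [sq_nonneg (em - 1)]
  have hs0 : 0 ≤ Real.sqrt t := Real.sqrt_nonneg t
  have hs : Real.sqrt t ^ 2 = t := Real.sq_sqrt ht0.le
  rcases lt_abs.1 ht with h | h
  · -- log t > 1, hence t > e = ep²
    have htgt : Real.exp 1 < t := (Real.lt_log_iff_exp_lt ht0).1 h
    have hep2 : ep ^ 2 = Real.exp 1 := by
      rw [hep, sq, ← Real.exp_add]; norm_num
    have : ep < Real.sqrt t := by nlinarith
    nlinarith
  · -- log t < -1, hence t < e⁻¹ = em²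
    have hlt : Real.log t < -1 := by linarith
    have htlt : t < Real.exp (-1) := by
      have := Real.exp_lt_exp.2 hlt
      rwa [Real.exp_log ht0] at this
    have hem2 : em ^ 2 = Real.exp (-1) := by
      rw [hem, sq, ← Real.exp_add]; norm_num
    have : Real.sqrt t < em := by nlinarith
    nlinarith

theorem stmt_6 {X : Type*} [MeasurableSpace X] (μ : Measure X) [SigmaFinite μ]
    (φ : X → ℝ) (hφ_meas : Measurable φ) (hφ_pos : ∀ x, 0 < φ x) :
    MemLp (fun x => Real.sqrt (φ x) - 1) 2 μ →
    ((∫⁻ x, ENNReal.ofReal (φ x - 1 - Real.log (φ x)) ∂μ < ⊤) ↔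
      (∫⁻ x in {x | 1 < |Real.log (φ x)|}, ENNReal.ofReal |Real.log (φ x)| ∂μ < ⊤)) := by
  intro hmem
  set A : Set X := {x | 1 < |Real.log (φ x)|} with hA
  have hAmeas : MeasurableSet A :=
    measurableSet_lt measurable_const ((Real.measurable_log.comp hφ_meas).abs)
  have hsq_meas : Measurable fun x => (Real.sqrt (φ x) - 1)^2 :=
    ((Measurable.sqrt hφ_meas).sub measurable_const).pow_const 2
  have hI : ∫⁻ x, ENNReal.ofReal ((Real.sqrt (φ x) - 1)^2) ∂μ < ⊤ := by
    have hint : Integrable (fun x => (Real.sqrt (φ x) - 1)^2) μ := hmem.integrable_sq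
    exact hint.lintegral_lt_top
  -- μ A < ∞
  have hmuA : μ A < ⊤ := by
    set c : ℝ := (1 - Real.exp (-(1/2)))^2 with hc
    have hc0 : 0 < c := by
      have h1 : Real.exp (-(1/2)) < 1 := Real.exp_lt_one_iff.2 (by norm_num)
      have h2 : 0 < 1 - Real.exp (-(1/2)) := by linarith
      positivity
    have hle : ENNReal.ofReal c * μ A ≤ ∫⁻ x, ENNReal.ofReal ((Real.sqrt (φ x) - 1)^2) ∂μ := by
      calc ENNReal.ofReal c * μ A = ∫⁻ _ in A, ENNReal.ofReal c ∂μ := (setLIntegral_const _ _).symm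
        _ ≤ ∫⁻ x in A, ENNReal.ofReal ((Real.sqrt (φ x) - 1)^2) ∂μ := by
            refine setLIntegral_mono (hsq_meas.ennreal_ofReal) fun x hx => ?_
            exact ENNReal.ofReal_le_ofReal (aux_c_le (hφ_pos x) hx)
        _ ≤ _ := setLIntegral_le_lintegral _ _
    by_contra h
    rw [not_lt, top_le_iff] at h
    rw [h, ENNReal.mul_top ((ENNReal.ofReal_pos.2 hc0).ne')] at hle
    exact hI.ne (top_le_iff.1 hle)
  constructor
  · -- forward
    intro hF
    have hpt : ∀ x, ENNReal.ofReal |Real.log (φ x)| ≤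
        ENNReal.ofReal (φ x - 1 - Real.log (φ x)) + 2 := by
      intro x
      have h0 : 0 ≤ φ x - 1 - Real.log (φ x) := by
        have := Real.log_le_sub_one_of_pos (hφ_pos x); linarith
      calc ENNReal.ofReal |Real.log (φ x)|
          ≤ ENNReal.ofReal ((φ x - 1 - Real.log (φ x)) + 2) :=
            ENNReal.ofReal_le_ofReal (aux_abs_log_le (hφ_pos x))
        _ = ENNReal.ofReal (φ x - 1 - Real.log (φ x)) + 2 := by
            rw [ENNReal.ofReal_add h0 (by norm_num)]; norm_num
    calc ∫⁻ x in A, ENNReal.ofReal |Real.log (φ x)| ∂μ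
        ≤ ∫⁻ x in A, (ENNReal.ofReal (φ x - 1 - Real.log (φ x)) + 2) ∂μ :=
          lintegral_mono fun x => hpt x
      _ = ∫⁻ x in A, ENNReal.ofReal (φ x - 1 - Real.log (φ x)) ∂μ + 2 * μ A := by
          rw [lintegral_add_right _ measurable_const, setLIntegral_const]
      _ ≤ ∫⁻ x, ENNReal.ofReal (φ x - 1 - Real.log (φ x)) ∂μ + 2 * μ A :=
          add_le_add_left (setLIntegral_le_lintegral _ _) _
      _ < ⊤ := ENNReal.add_lt_top.2 ⟨hF, ENNReal.mul_lt_top (by norm_num) hmuA⟩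
  · -- reverse
    intro hG
    have hexp4 : Real.exp (-1) > (1:ℝ)/4 := by
      have h4 : Real.exp 1 < 4 := by
        have := Real.exp_one_lt_d9; linarith
      have : Real.exp (-1) = (Real.exp 1)⁻¹ := Real.exp_neg 1
      rw [this]
      rw [gt_iff_lt, lt_inv_comm₀ (by norm_num) (Real.exp_pos 1)]
      linarith
    have hpt : ∀ x, ENNReal.ofReal (φ x - 1 - Real.log (φ x)) ≤
        ENNReal.ofReal (9 * (Real.sqrt (φ x) - 1)^2)
          + A.indicator (fun x => ENNReal.ofReal |Real.log (φ x)|) x := by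
      intro x
      by_cases hx : (1:ℝ)/4 ≤ φ x
      · exact le_trans (ENNReal.ofReal_le_ofReal (aux_f_le hx)) le_self_add
      · push_neg at hx
        have hx1 : φ x < 1 := by linarith
        have hxA : x ∈ A := by
          have hlog : Real.log (φ x) < -1 := by
            have h1 : Real.log (φ x) < Real.log (Real.exp (-1)) :=
              Real.log_lt_log (hφ_pos x) (by linarith)
            rwa [Real.log_exp] at h1
          simp only [hA, Set.mem_setOf_eq]
          rw [abs_of_neg (by linarith)]; linarith
        rw [Set.indicator_of_mem hxA]
        exact le_trans (ENNReal.ofReal_le_ofReal (aux_f_le_abs (hφ_pos x) hx1)) le_add_self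
    calc ∫⁻ x, ENNReal.ofReal (φ x - 1 - Real.log (φ x)) ∂μ
        ≤ ∫⁻ x, (ENNReal.ofReal (9 * (Real.sqrt (φ x) - 1)^2)
            + A.indicator (fun x => ENNReal.ofReal |Real.log (φ x)|) x) ∂μ :=
          lintegral_mono hpt
      _ = ∫⁻ x, ENNReal.ofReal (9 * (Real.sqrt (φ x) - 1)^2) ∂μ
            + ∫⁻ x in A, ENNReal.ofReal |Real.log (φ x)| ∂μ := by
          rw [lintegral_add_left ((hsq_meas.const_mul 9).ennreal_ofReal),
            lintegral_indicator hAmeas (fun x => ENNReal.ofReal |Real.log (φ x)|)]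
      _ = 9 * ∫⁻ x, ENNReal.ofReal ((Real.sqrt (φ x) - 1)^2) ∂μ
            + ∫⁻ x in A, ENNReal.ofReal |Real.log (φ x)| ∂μ := by
          congr 1
          simp_rw [ENNReal.ofReal_mul (by norm_num : (0:ℝ) ≤ 9)]
          rw [lintegral_const_mul _ hsq_meas.ennreal_ofReal]
          norm_num
      _ < ⊤ := ENNReal.add_lt_top.2 ⟨ENNReal.mul_lt_top (by norm_num) hI, hG⟩
end

section
/- Let T be a nonsingular invertible transformation of (X, 𝒜, μ) and h ∈ L²_ℝ(μ) with h ≥ −1 a.e. such that √T' · (h∘T⁻¹ + 1) = h + 1 μ-a.e., where T' = d(μ∘T⁻¹)/dμ. Then the measure ν with dν/dμ = (h+1)² is T-invariant, i.e. ν∘T⁻¹ = ν. -/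
open MeasureTheory ENNReal

theorem stmt_13 {X : Type*} [MeasurableSpace X] (μ : Measure X) [SigmaFinite μ]
    (T Tinv : X → X) (hT : Measurable T) (hTinv : Measurable Tinv)
    (hleft : Function.LeftInverse Tinv T) (hright : Function.RightInverse Tinv T)
    (T' : X → ℝ) (hT'meas : Measurable T') (hT'pos : ∀ᵐ x ∂μ, 0 < T' x)
    (hmapT : μ.map T = μ.withDensity (fun x => ENNReal.ofReal (T' x)))
    (h : X → ℝ) (hmeas : Measurable h) (hL2 : MemLp h 2 μ)
    (hge : ∀ᵐ x ∂μ, -1 ≤ h x)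
    (hfix : ∀ᵐ x ∂μ, Real.sqrt (T' x) * (h (Tinv x) + 1) = h x + 1) :
    (μ.withDensity (fun x => ENNReal.ofReal ((h x + 1) ^ 2))).map T =
      μ.withDensity (fun x => ENNReal.ofReal ((h x + 1) ^ 2)) := by
  set g : X → ℝ≥0∞ := fun x => ENNReal.ofReal ((h x + 1) ^ 2) with hg
  have hgmeas : Measurable g := by
    apply Measurable.ennreal_ofReal
    exact ((hmeas.add measurable_const).pow measurable_const)
  have key : ∀ᵐ x ∂μ, g x = ENNReal.ofReal (T' x) * g (Tinv x) := by
    filter_upwards [hfix, hT'pos] with x hfx hpos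
    have hsq : (h x + 1) ^ 2 = T' x * (h (Tinv x) + 1) ^ 2 := by
      rw [← hfx, mul_pow, Real.sq_sqrt hpos.le]
    simp only [hg, hsq, ENNReal.ofReal_mul hpos.le]
  ext s hs
  rw [Measure.map_apply hT hs, withDensity_apply _ (hT hs), withDensity_apply _ hs]
  calc ∫⁻ x in T ⁻¹' s, g x ∂μ
      = ∫⁻ x in T ⁻¹' s, g (Tinv (T x)) ∂μ := by
        apply lintegral_congr_ae
        filter_upwards with x
        rw [hleft x]
    _ = ∫⁻ x, (g ∘ Tinv) x ∂((μ.restrict (T ⁻¹' s)).map T) := by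
        rw [lintegral_map (hgmeas.comp hTinv) hT]; rfl
    _ = ∫⁻ x in s, (g ∘ Tinv) x ∂(μ.map T) := by
        rw [Measure.restrict_map hT hs]
    _ = ∫⁻ x in s, (g ∘ Tinv) x ∂(μ.withDensity (fun x => ENNReal.ofReal (T' x))) := by
        rw [hmapT]
    _ = ∫⁻ x in s, ENNReal.ofReal (T' x) * g (Tinv x) ∂μ := by
        rw [restrict_withDensity hs,
          lintegral_withDensity_eq_lintegral_mul _ hT'meas.ennreal_ofReal
            (hgmeas.comp hTinv)]
        rfl
    _ = ∫⁻ x in s, g x ∂μ := by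
        apply lintegral_congr_ae
        exact (ae_restrict_of_ae key).mono fun x hx => hx.symm
end

section
/- Let m be the measure on ℝ with dm/dx = 1_{(−∞,0)} + 2·1_{[0,∞)} (with respect to Lebesgue measure), and for t ∈ ℝ let T_t : ℝ → ℝ be the translation T_t(x) = x + t. Then d(m∘T_t⁻¹)/dm − 1 ∈ L¹(m), and ∫_ℝ (d(m∘T_{−t}⁻¹)/dm − 1) dm = t for every t ∈ ℝ. -/
open MeasureTheory

noncomputable def rhoN : ℝ → NNReal := fun x => if x < 0 then 1 else 2

lemma rhoN_meas : Measurable rhoN :=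
  Measurable.ite measurableSet_Iio measurable_const measurable_const

noncomputable def rhoE : ℝ → ENNReal := fun x => (rhoN x : ENNReal)

lemma rho_eq : (fun x : ℝ => if x < 0 then (1 : ENNReal) else 2) = rhoE := by
  funext x
  simp [rhoE, rhoN, apply_ite (fun y : NNReal => (y : ENNReal))]

lemma rhoE_meas : Measurable rhoE := rhoN_meas.coe_nnreal_ennreal

lemma rhoE_ne_zero (x : ℝ) : rhoE x ≠ 0 := by
  simp only [rhoE, rhoN]; split <;> simp

lemma rhoE_ne_top (x : ℝ) : rhoE x ≠ ⊤ := ENNReal.coe_ne_top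

/-- The map of the measure under translation. -/
lemma map_withDensity (t : ℝ) :
    (MeasureTheory.volume.withDensity rhoE).map (fun y => y + t)
      = MeasureTheory.volume.withDensity (fun x => rhoE (x - t)) := by
  ext s hs
  rw [Measure.map_apply (measurable_add_const t) hs, withDensity_apply _ hs,
    withDensity_apply _ ((measurable_add_const t) hs)]
  have hmp : MeasurePreserving (fun y : ℝ => y + t) volume volume :=
    measurePreserving_add_right volume t
  calc ∫⁻ x in (fun y => y + t) ⁻¹' s, rhoE x ∂volume
      = ∫⁻ x in s, rhoE (x - t) ∂(volume.map (fun y => y + t)) := by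
        rw [setLIntegral_map hs (show Measurable fun x : ℝ => rhoE (x - t) from
          rhoE_meas.comp (measurable_sub_const t)) (measurable_add_const t)]
        simp
    _ = ∫⁻ x in s, rhoE (x - t) ∂volume := by rw [hmp.map_eq]

noncomputable def hfun (t : ℝ) : ℝ → ENNReal := fun x => rhoE (x - t) / rhoE x

lemma hfun_meas (t : ℝ) : Measurable (hfun t) :=
  (rhoE_meas.comp (measurable_sub_const t)).div rhoE_meas

lemma hfun_ne_top (t : ℝ) (x : ℝ) : hfun t x ≠ ⊤ :=
  (ENNReal.div_lt_top (rhoE_ne_top _) (rhoE_ne_zero _)).ne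

/-- the map is a withDensity of the base measure -/
lemma map_eq_withDensity (t : ℝ) :
    (MeasureTheory.volume.withDensity rhoE).map (fun y => y + t)
      = (MeasureTheory.volume.withDensity rhoE).withDensity (hfun t) := by
  rw [map_withDensity, ← withDensity_mul _ rhoE_meas (hfun_meas t)]
  congr 1
  funext x
  simp only [Pi.mul_apply, hfun]
  rw [ENNReal.mul_div_cancel (rhoE_ne_zero x) (rhoE_ne_top x)]

/-- The real-valued function equal to the integrand times density. -/
noncomputable def G (t : ℝ) : ℝ → ℝ := fun x =>
  ((rhoN (x - t) : ℝ)) - ((rhoN x : ℝ))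

lemma G_eq_indicator (t : ℝ) : G t = fun x =>
    (Set.Ico t 0).indicator (fun _ => (1 : ℝ)) x
      - (Set.Ico 0 t).indicator (fun _ => (1 : ℝ)) x := by
  funext x
  simp only [G, rhoN, Set.indicator_apply, Set.mem_Ico,
    apply_ite (fun y : NNReal => (y : ℝ))]
  rcases lt_or_ge x 0 with hx | hx <;> rcases lt_or_ge (x - t) 0 with hxt | hxt
  · have h1 : ¬ t ≤ x := by linarith
    have h2 : ¬ (0 : ℝ) ≤ x := not_le.mpr hx
    simp [hx, hxt, h1, h2]
  · have h1 : t ≤ x := by linarith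
    have h2 : ¬ (0 : ℝ) ≤ x := not_le.mpr hx
    simp [hx, not_lt.mpr hxt, h1, h2]
    norm_num
  · have h1 : x < t := by linarith
    have h2 : ¬ x < 0 := not_lt.mpr hx
    simp [hxt, h1, h2, hx]
    norm_num
  · have h1 : ¬ x < t := by simp; linarith
    have h2 : ¬ x < 0 := not_lt.mpr hx
    simp [not_lt.mpr hxt, h1, h2]

lemma ind_integrable (a b : ℝ) :
    Integrable ((Set.Ico a b).indicator (fun _ => (1 : ℝ))) volume := by
  rw [integrable_indicator_iff measurableSet_Ico]
  exact integrableOn_const (by simp [Real.volume_Ico])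

lemma G_integrable (t : ℝ) : Integrable (G t) volume := by
  rw [G_eq_indicator]
  exact (ind_integrable t 0).sub (ind_integrable 0 t)

lemma G_integral (t : ℝ) : ∫ x, G t x = -t := by
  rw [G_eq_indicator]
  rw [integral_sub (ind_integrable t 0) (ind_integrable 0 t)]
  rw [integral_indicator measurableSet_Ico, integral_indicator measurableSet_Ico]
  simp only [integral_const, measureReal_def, MeasureTheory.Measure.restrict_apply_univ, Real.volume_Ico,
    smul_eq_mul, mul_one]
  rcases le_or_gt t 0 with ht | ht
  · rw [ENNReal.toReal_ofReal (by linarith), ENNReal.ofReal_eq_zero.mpr (by linarith)]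
    simp
  · rw [ENNReal.ofReal_eq_zero.mpr (by linarith), ENNReal.toReal_ofReal (by linarith)]
    simp

/-- pointwise identity -/
lemma key_pointwise (t : ℝ) (x : ℝ) :
    (rhoN x : ℝ) * (((hfun t x).toReal) - 1) = G t x := by
  simp only [hfun, rhoE, G]
  rw [ENNReal.toReal_div]
  have h1 : ((rhoN x : ENNReal)).toReal = (rhoN x : ℝ) := rfl
  have h2 : ((rhoN (x - t) : ENNReal)).toReal = (rhoN (x - t) : ℝ) := rfl
  rw [h1, h2]
  have hne : (rhoN x : ℝ) ≠ 0 := by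
    simp only [rhoN]; split <;> norm_num
  field_simp

theorem stmt_15 (m : Measure ℝ)
    (hm : m = MeasureTheory.volume.withDensity
      (fun x => if x < 0 then (1 : ENNReal) else 2)) :
    ∀ t : ℝ,
      Integrable (fun x => ((m.map (fun y => y + t)).rnDeriv m x).toReal - 1) m ∧
      ∫ x, (((m.map (fun y => y + (-t))).rnDeriv m x).toReal - 1) ∂m = t := by
  subst hm
  rw [rho_eq]
  haveI hsf : SigmaFinite (MeasureTheory.volume.withDensity rhoE) :=
    SigmaFinite.withDensity_of_ne_top' (fun x => rhoE_ne_top x)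
  set M := MeasureTheory.volume.withDensity rhoE with hM
  have hrn : ∀ t : ℝ, (M.map (fun y => y + t)).rnDeriv M =ᵐ[M] hfun t := by
    intro t
    rw [hM, map_eq_withDensity t]
    exact Measure.rnDeriv_withDensity _ (hfun_meas t)
  have hint : ∀ t : ℝ, Integrable (fun x => ((hfun t x).toReal) - 1) M := by
    intro t
    rw [hM, integrable_withDensity_iff rhoE_meas (Filter.Eventually.of_forall fun x =>
      (rhoE_ne_top x).lt_top)]
    have : (fun x => (((hfun t x).toReal) - 1) * (rhoE x).toReal) = G t := by
      funext x
      rw [← key_pointwise t x]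
      have h1 : (rhoE x).toReal = (rhoN x : ℝ) := rfl
      rw [h1]; ring
    rw [this]
    exact G_integrable t
  have hinteg : ∀ t : ℝ, ∫ x, (((hfun t x).toReal) - 1) ∂M = -t := by
    intro t
    rw [hM, show rhoE = (fun x => ((rhoN x : NNReal) : ENNReal)) from rfl,
      integral_withDensity_eq_integral_smul rhoN_meas]
    have : (fun x => rhoN x • (((hfun t x).toReal) - 1)) = G t := by
      funext x
      rw [← key_pointwise t x]
      rfl
    rw [this]
    exact G_integral t
  intro t
  constructor
  · exact (hint t).congr (by filter_upwards [hrn t] with x hx; rw [hx])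
  · rw [integral_congr_ae (g := fun x => ((hfun (-t) x).toReal) - 1)
      (by filter_upwards [hrn (-t)] with x hx; rw [hx])]
    rw [hinteg (-t)]; ring
end

section
/- Let (X, 𝒜, μ) be σ-finite, let T be a nonsingular invertible transformation with density T' = d(μ∘T⁻¹)/dμ such that T' − 1 ∈ L¹(μ), and let ν be a σ-finite measure equivalent to μ with dν/dμ − 1 ∈ L¹(μ). Then d(ν∘T⁻¹)/dν − 1 ∈ L¹(ν) and ∫_X (d(ν∘T⁻¹)/dν − 1) dν = ∫_X (d(μ∘T⁻¹)/dμ − 1) dμ. -/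
open MeasureTheory

theorem stmt_16 {X : Type*} [MeasurableSpace X] (μ ν : Measure X)
    [SigmaFinite μ] [SigmaFinite ν]
    (hμν : ν ≪ μ) (hνμ : μ ≪ ν)
    (hdens : Integrable (fun x => (ν.rnDeriv μ x).toReal - 1) μ)
    (T Tinv : X → X) (hT : Measurable T) (hTinv : Measurable Tinv)
    (hleft : Function.LeftInverse Tinv T) (hright : Function.RightInverse Tinv T)
    (T' : X → ℝ) (hT'meas : Measurable T') (hT'pos : ∀ᵐ x ∂μ, 0 < T' x)
    (hmapT : μ.map T = μ.withDensity (fun x => ENNReal.ofReal (T' x)))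
    (hT'int : Integrable (fun x => T' x - 1) μ) :
    Integrable (fun x => ((ν.map T).rnDeriv ν x).toReal - 1) ν ∧
    ∫ x, (((ν.map T).rnDeriv ν x).toReal - 1) ∂ν = ∫ x, (T' x - 1) ∂μ := by
  have hfmeas : Measurable (ν.rnDeriv μ) := Measure.measurable_rnDeriv ν μ
  have hfT : Measurable (fun y => ν.rnDeriv μ (Tinv y)) := hfmeas.comp hTinv
  have hhmeas : Measurable (fun x => ν.rnDeriv μ (Tinv x) * ENNReal.ofReal (T' x)) :=
    hfT.mul hT'meas.ennreal_ofReal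
  -- absolute continuity facts for μ.map T and μ.map Tinv
  have hμT_ac : μ.map T ≪ μ := by
    rw [hmapT]; exact withDensity_absolutelyContinuous μ _
  have hμ_μT : μ ≪ μ.map T := by
    rw [hmapT]
    refine withDensity_absolutelyContinuous' hT'meas.ennreal_ofReal.aemeasurable ?_
    filter_upwards [hT'pos] with x hx
    simp [ENNReal.ofReal_eq_zero, not_le, hx]
  have hmapTinv_ac : μ.map Tinv ≪ μ := by
    refine Measure.AbsolutelyContinuous.mk fun s hs hs0 => ?_
    rw [Measure.map_apply hTinv hs]
    refine hμ_μT ?_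
    rw [Measure.map_apply hT (hTinv hs), ← Set.preimage_comp,
      hleft.comp_eq_id, Set.preimage_id]
    exact hs0
  -- Step C : ν.map T = μ.withDensity ((ν.rnDeriv μ ∘ Tinv) * ofReal T')
  have hνT : ν.map T = μ.withDensity (fun x => ν.rnDeriv μ (Tinv x) * ENNReal.ofReal (T' x)) := by
    ext A hA
    rw [Measure.map_apply hT hA, withDensity_apply _ hA,
      ← Measure.setLIntegral_rnDeriv hμν (T ⁻¹' A)]
    calc ∫⁻ x in T ⁻¹' A, ν.rnDeriv μ x ∂μ
        = ∫⁻ x in T ⁻¹' A, ν.rnDeriv μ (Tinv (T x)) ∂μ := by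
          refine setLIntegral_congr_fun (hT hA) (fun x _ => by rw [hleft x])
      _ = ∫⁻ y in A, ν.rnDeriv μ (Tinv y) ∂(μ.map T) :=
          (setLIntegral_map hA hfT hT).symm
      _ = ∫⁻ x in A, ν.rnDeriv μ (Tinv x) * ENNReal.ofReal (T' x) ∂μ := by
          rw [hmapT, setLIntegral_withDensity_eq_setLIntegral_mul _
            hT'meas.ennreal_ofReal hfT hA]
          exact lintegral_congr fun x => by simp [mul_comm]
  -- Step D : rnDeriv of ν.map T with respect to ν
  have hGmeas : Measurable ((μ.rnDeriv ν) *
      fun x => ν.rnDeriv μ (Tinv x) * ENNReal.ofReal (T' x)) :=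
    (Measure.measurable_rnDeriv μ ν).mul hhmeas
  have hνT' : ν.map T = ν.withDensity ((μ.rnDeriv ν) *
      fun x => ν.rnDeriv μ (Tinv x) * ENNReal.ofReal (T' x)) := by
    rw [withDensity_mul _ (Measure.measurable_rnDeriv μ ν) hhmeas,
      Measure.withDensity_rnDeriv_eq μ ν hνμ]
    exact hνT
  have hg_eq : (ν.map T).rnDeriv ν =ᵐ[ν] ((μ.rnDeriv ν) *
      fun x => ν.rnDeriv μ (Tinv x) * ENNReal.ofReal (T' x)) := by
    rw [hνT']; exact Measure.rnDeriv_withDensity ν hGmeas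
  -- pointwise a.e. μ facts
  have hfpos : ∀ᵐ x ∂μ, 0 < ν.rnDeriv μ x := Measure.rnDeriv_pos' hνμ
  have hflt : ∀ᵐ x ∂μ, ν.rnDeriv μ x < ⊤ := Measure.rnDeriv_lt_top ν μ
  have hfTinv_lt : ∀ᵐ x ∂μ, ν.rnDeriv μ (Tinv x) < ⊤ := by
    have h1 : ∀ᵐ y ∂(μ.map Tinv), ν.rnDeriv μ y < ⊤ := hmapTinv_ac.ae_le hflt
    rwa [ae_map_iff hTinv.aemeasurable (measurableSet_lt hfmeas measurable_const)] at h1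
  have hinv : μ.rnDeriv ν =ᵐ[μ] (ν.rnDeriv μ)⁻¹ := (Measure.inv_rnDeriv' hνμ).symm
  -- key a.e. μ identity
  have hkey : (fun x => (ν.rnDeriv μ x).toReal • (((ν.map T).rnDeriv ν x).toReal - 1))
      =ᵐ[μ] fun x => (ν.rnDeriv μ (Tinv x)).toReal * T' x - (ν.rnDeriv μ x).toReal := by
    filter_upwards [hfpos, hflt, hfTinv_lt, hT'pos, hνμ.ae_le hg_eq, hinv]
      with x h1 h2 h3 h4 h5 h6
    have hFx : (ν.rnDeriv μ x).toReal ≠ 0 := ENNReal.toReal_ne_zero.mpr ⟨h1.ne', h2.ne⟩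
    have hval : (((ν.map T).rnDeriv ν) x).toReal
        = ((ν.rnDeriv μ x).toReal)⁻¹ * ((ν.rnDeriv μ (Tinv x)).toReal * T' x) := by
      rw [h5]
      simp only [Pi.mul_apply, Pi.inv_apply] at h6 ⊢
      rw [h6, ENNReal.toReal_mul, ENNReal.toReal_mul, ENNReal.toReal_ofReal h4.le,
        ENNReal.toReal_inv]
    rw [hval, smul_eq_mul, mul_sub, mul_one, ← mul_assoc, mul_inv_cancel₀ hFx, one_mul]
  have hsfT : SigmaFinite (μ.map T) := by
    rw [hmapT]; exact SigmaFinite.withDensity_ofReal T'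
  -- the A-part: integrability and integral of x ↦ T' x * ((F ∘ Tinv) x - 1)
  have hμT_rn : (μ.map T).rnDeriv μ =ᵐ[μ] fun x => ENNReal.ofReal (T' x) := by
    rw [hmapT]; exact Measure.rnDeriv_withDensity μ hT'meas.ennreal_ofReal
  have hkmeas : Measurable (fun y => (ν.rnDeriv μ (Tinv y)).toReal - 1) :=
    ((hfmeas.comp hTinv).ennreal_toReal).sub measurable_const
  have hk_int_map : Integrable (fun y => (ν.rnDeriv μ (Tinv y)).toReal - 1) (μ.map T) := by
    rw [integrable_map_measure hkmeas.aestronglyMeasurable hT.aemeasurable]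
    have : ((fun y => (ν.rnDeriv μ (Tinv y)).toReal - 1) ∘ T)
        = fun x => (ν.rnDeriv μ x).toReal - 1 := funext fun x => by simp [hleft x]
    rw [this]; exact hdens
  have hA_congr : (fun x => ((μ.map T).rnDeriv μ x).toReal •
      ((ν.rnDeriv μ (Tinv x)).toReal - 1))
      =ᵐ[μ] fun x => T' x * ((ν.rnDeriv μ (Tinv x)).toReal - 1) := by
    filter_upwards [hμT_rn, hT'pos] with x h1 h2
    simp [h1, ENNReal.toReal_ofReal h2.le]
  have hA_int : Integrable (fun x => T' x * ((ν.rnDeriv μ (Tinv x)).toReal - 1)) μ :=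
    (((MeasureTheory.integrable_rnDeriv_smul_iff hμT_ac).mpr hk_int_map).congr hA_congr)
  have hA_eq : ∫ x, T' x * ((ν.rnDeriv μ (Tinv x)).toReal - 1) ∂μ
      = ∫ x, ((ν.rnDeriv μ x).toReal - 1) ∂μ := by
    calc ∫ x, T' x * ((ν.rnDeriv μ (Tinv x)).toReal - 1) ∂μ
        = ∫ x, ((μ.map T).rnDeriv μ x).toReal • ((ν.rnDeriv μ (Tinv x)).toReal - 1) ∂μ :=
          (integral_congr_ae hA_congr).symm
      _ = ∫ y, ((ν.rnDeriv μ (Tinv y)).toReal - 1) ∂(μ.map T) :=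
          MeasureTheory.integral_rnDeriv_smul hμT_ac
      _ = ∫ x, ((ν.rnDeriv μ (Tinv (T x))).toReal - 1) ∂μ :=
          integral_map hT.aemeasurable hkmeas.aestronglyMeasurable
      _ = ∫ x, ((ν.rnDeriv μ x).toReal - 1) ∂μ := by
          exact integral_congr_ae (ae_of_all _ fun x => by simp [hleft x])
  -- the function ψ
  have hψ_rw : ∀ x : X, (ν.rnDeriv μ (Tinv x)).toReal * T' x - (ν.rnDeriv μ x).toReal
      = (T' x * ((ν.rnDeriv μ (Tinv x)).toReal - 1)) + (T' x - 1)
        - ((ν.rnDeriv μ x).toReal - 1) := fun x => by ring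
  have hψ_int : Integrable
      (fun x => (ν.rnDeriv μ (Tinv x)).toReal * T' x - (ν.rnDeriv μ x).toReal) μ := by
    refine (((hA_int.add hT'int).sub hdens).congr (ae_of_all _ fun x => ?_))
    exact (hψ_rw x).symm
  have hψ_eq : ∫ x, ((ν.rnDeriv μ (Tinv x)).toReal * T' x - (ν.rnDeriv μ x).toReal) ∂μ
      = ∫ x, (T' x - 1) ∂μ := by
    calc ∫ x, ((ν.rnDeriv μ (Tinv x)).toReal * T' x - (ν.rnDeriv μ x).toReal) ∂μ
        = ∫ x, ((T' x * ((ν.rnDeriv μ (Tinv x)).toReal - 1)) + (T' x - 1)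
            - ((ν.rnDeriv μ x).toReal - 1)) ∂μ := by simp_rw [hψ_rw]
      _ = (∫ x, T' x * ((ν.rnDeriv μ (Tinv x)).toReal - 1) ∂μ + ∫ x, (T' x - 1) ∂μ)
            - ∫ x, ((ν.rnDeriv μ x).toReal - 1) ∂μ := by
          have hAB : Integrable (fun x => T' x * ((ν.rnDeriv μ (Tinv x)).toReal - 1)
              + (T' x - 1)) μ := hA_int.add hT'int
          rw [integral_sub hAB hdens, integral_add hA_int hT'int]
      _ = ∫ x, (T' x - 1) ∂μ := by rw [hA_eq]; ring
  have hsmul_int : Integrable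
      (fun x => (ν.rnDeriv μ x).toReal • (((ν.map T).rnDeriv ν x).toReal - 1)) μ :=
    hψ_int.congr hkey.symm
  refine ⟨(MeasureTheory.integrable_rnDeriv_smul_iff hμν).mp hsmul_int, ?_⟩
  calc ∫ x, (((ν.map T).rnDeriv ν x).toReal - 1) ∂ν
      = ∫ x, (ν.rnDeriv μ x).toReal • (((ν.map T).rnDeriv ν x).toReal - 1) ∂μ :=
        (MeasureTheory.integral_rnDeriv_smul hμν).symm
    _ = ∫ x, ((ν.rnDeriv μ (Tinv x)).toReal * T' x - (ν.rnDeriv μ x).toReal) ∂μ :=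
        integral_congr_ae hkey
    _ = ∫ x, (T' x - 1) ∂μ := hψ_eq
end
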